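/- For Erlang(k, \lambda) inter-request times, the ratio of the static baseline cost min((\lambda/k) R, 1) to the optimal offline cost 1 - (e^{-\lambda R}/k) \sum_{m=1}^{k} \sum_{n=0}^{m-1} (\lambda R)^n / n! is at most 1/(1 - e^{-k} k^k / k!), attained at \lambda = k/R. -/

import Mathlib

open Finset Real

noncomputable def Pk (k : ℕ) (x : ℝ) : ℝ := ∑ n ∈ Finset.range k, x ^ n / n.factorial
noncomputable def Qk (k : ℕ) (x : ℝ) : ℝ :=
  ∑ n ∈ Finset.range k, ((k : ℝ) - n) * x ^ n / n.factorial
noncomputable def gk (k : ℕ) (x : ℝ) : ℝ := Real.exp (-x) * Qk k x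

lemma sum_Icc_eq (k : ℕ) (a : ℝ) :
    ∑ m ∈ Finset.Icc 1 k, ∑ n ∈ Finset.range m, a ^ n / n.factorial = Qk k a := by
  induction k with
  | zero => simp [Qk]
  | succ k ih =>
    rw [Finset.sum_Icc_succ_top (by omega), ih]
    have h1 : Qk (k+1) a
        = ∑ n ∈ Finset.range (k+1), (((k:ℝ) - n) * a ^ n / n.factorial + a ^ n / n.factorial) := by
      unfold Qk
      refine Finset.sum_congr rfl fun n _ => ?_
      push_cast
      ring
    rw [h1, Finset.sum_add_distrib, Finset.sum_range_succ (fun n => ((k:ℝ) - n) * a ^ n / n.factorial)]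
    unfold Qk
    simp

lemma Qk_at_k (k : ℕ) : Qk k (k : ℝ) = k * ((k:ℝ))^k / k.factorial := by
  set f : ℕ → ℝ := fun n => (n : ℝ) * (k:ℝ)^n / n.factorial with hf
  have h : ∀ n ∈ Finset.range k, ((k : ℝ) - n) * (k:ℝ) ^ n / n.factorial = f (n+1) - f n := by
    intro n _
    simp only [hf]
    rw [Nat.factorial_succ]
    have hn : (n.factorial : ℝ) ≠ 0 := Nat.cast_ne_zero.2 n.factorial_ne_zero
    have hn1 : ((n:ℝ) + 1) ≠ 0 := by positivity
    push_cast
    field_simp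
    ring
  rw [Qk, Finset.sum_congr rfl h, Finset.sum_range_sub f]
  simp [hf]

lemma derivQ_sum_eq (j : ℕ) (x : ℝ) :
    ∑ n ∈ Finset.range (j+1), (((j:ℝ)+1) - n) * ((n:ℝ) * x^(n-1)) / n.factorial
      = Qk (j+1) x - Pk (j+1) x := by
  have hR : Qk (j+1) x - Pk (j+1) x
      = ∑ n ∈ Finset.range (j+1), ((((j:ℝ)+1) - n) * x^n/n.factorial - x^n/n.factorial) := by
    unfold Qk Pk
    rw [← Finset.sum_sub_distrib]
    push_cast
    rfl
  rw [Finset.sum_range_succ'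
    (fun n => (((j:ℝ)+1) - n) * ((n:ℝ) * x^(n-1)) / n.factorial) j, hR,
    Finset.sum_range_succ
    (fun n => (((j:ℝ)+1) - n) * x^n/n.factorial - x^n/n.factorial) j]
  have hlast : (((j:ℝ)+1) - j) * x^j/j.factorial - x^j/j.factorial = 0 := by ring_nf
  rw [hlast, add_zero]
  simp only [Nat.cast_zero, zero_mul, mul_zero, zero_div, add_zero]
  refine Finset.sum_congr rfl fun n _ => ?_
  have hn : (n.factorial : ℝ) ≠ 0 := Nat.cast_ne_zero.2 n.factorial_ne_zero
  have hn1 : ((n:ℝ) + 1) ≠ 0 := by positivity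
  rw [Nat.add_sub_cancel, Nat.factorial_succ]
  push_cast
  field_simp
  ring

lemma derivP_sum_eq (j : ℕ) (x : ℝ) :
    ∑ n ∈ Finset.range (j+1), ((n:ℝ) * x^(n-1)) / n.factorial
      = Pk (j+1) x - x^j / j.factorial := by
  have hR : Pk (j+1) x - x^j / j.factorial = Pk j x := by
    unfold Pk; rw [Finset.sum_range_succ]; ring
  rw [hR, Finset.sum_range_succ' (fun n => ((n:ℝ) * x^(n-1)) / n.factorial)]
  simp only [Nat.cast_zero, zero_mul, zero_div, add_zero]
  unfold Pk
  refine Finset.sum_congr rfl fun n _ => ?_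
  have hn : (n.factorial : ℝ) ≠ 0 := Nat.cast_ne_zero.2 n.factorial_ne_zero
  have hn1 : ((n:ℝ) + 1) ≠ 0 := by positivity
  rw [Nat.add_sub_cancel, Nat.factorial_succ]
  push_cast
  field_simp

lemma hasDerivAt_Qk (k : ℕ) (hk : 1 ≤ k) (x : ℝ) :
    HasDerivAt (Qk k) (Qk k x - Pk k x) x := by
  obtain ⟨j, rfl⟩ : ∃ j, k = j + 1 := ⟨k - 1, by omega⟩
  have H : ∀ n ∈ Finset.range (j+1), HasDerivAt
      (fun y : ℝ => (((j:ℝ)+1) - n) * y^n / n.factorial)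
      ((((j:ℝ)+1) - n) * ((n:ℝ) * x^(n-1)) / n.factorial) x := by
    intro n _
    simpa [mul_div_assoc, mul_assoc] using
      (((hasDerivAt_pow n x).const_mul (((j:ℝ)+1) - n)).div_const (n.factorial : ℝ))
  have := HasDerivAt.fun_sum H
  rw [derivQ_sum_eq] at this
  refine HasDerivAt.congr_of_eventuallyEq this (Filter.Eventually.of_forall fun y => ?_)
  unfold Qk
  push_cast
  rfl

lemma hasDerivAt_Pk (k : ℕ) (hk : 1 ≤ k) (x : ℝ) :
    HasDerivAt (Pk k) (Pk k x - x^(k-1) / (k-1).factorial) x := by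
  obtain ⟨j, rfl⟩ : ∃ j, k = j + 1 := ⟨k - 1, by omega⟩
  have H : ∀ n ∈ Finset.range (j+1), HasDerivAt
      (fun y : ℝ => y^n / n.factorial)
      (((n:ℝ) * x^(n-1)) / n.factorial) x := by
    intro n _
    exact (hasDerivAt_pow n x).div_const (n.factorial : ℝ)
  have := HasDerivAt.fun_sum H
  rw [derivP_sum_eq] at this
  exact this

lemma Pk_nonneg (k : ℕ) {x : ℝ} (hx : 0 ≤ x) : 0 ≤ Pk k x :=
  Finset.sum_nonneg fun n _ => by positivity

lemma hasDerivAt_gk (k : ℕ) (hk : 1 ≤ k) (x : ℝ) :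
    HasDerivAt (gk k) (-(Real.exp (-x) * Pk k x)) x := by
  have he : HasDerivAt (fun y : ℝ => Real.exp (-y)) (Real.exp (-x) * (-1)) x :=
    (hasDerivAt_id x).neg.exp
  have := he.fun_mul (hasDerivAt_Qk k hk x)
  exact this.congr_deriv (by ring)

lemma gk_antitoneOn (k : ℕ) (hk : 1 ≤ k) : AntitoneOn (gk k) (Set.Ici 0) := by
  apply antitoneOn_of_hasDerivWithinAt_nonpos (f' := fun x => -(Real.exp (-x) * Pk k x))
    (convex_Ici 0)
    (fun x _ => (hasDerivAt_gk k hk x).continuousAt.continuousWithinAt)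
    (fun x _ => (hasDerivAt_gk k hk x).hasDerivWithinAt)
  intro x hx
  rw [interior_Ici] at hx
  exact neg_nonpos.2 (mul_nonneg (Real.exp_nonneg _) (Pk_nonneg k (le_of_lt hx)))

lemma h_concave (k : ℕ) (hk : 1 ≤ k) (c : ℝ) :
    ConcaveOn ℝ (Set.Icc 0 (k:ℝ)) (fun x => (k:ℝ) - gk k x - c * x) := by
  have hf : ∀ x : ℝ, HasDerivAt (fun y => (k:ℝ) - gk k y - c * y)
      (Real.exp (-x) * Pk k x - c) x := by
    intro x
    have := ((hasDerivAt_const x (k:ℝ)).fun_sub (hasDerivAt_gk k hk x)).fun_sub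
      ((hasDerivAt_id x).const_mul c)
    exact this.congr_deriv (by ring)
  have hf' : ∀ x : ℝ, HasDerivAt (fun y => Real.exp (-y) * Pk k y - c)
      (-(Real.exp (-x) * x^(k-1) / (k-1).factorial)) x := by
    intro x
    have he : HasDerivAt (fun y : ℝ => Real.exp (-y)) (Real.exp (-x) * (-1)) x :=
      (hasDerivAt_id x).neg.exp
    have := (he.fun_mul (hasDerivAt_Pk k hk x)).sub_const c
    exact this.congr_deriv (by ring)
  apply concaveOn_of_hasDerivWithinAt2_nonpos (convex_Icc _ _)
    (f' := fun x => Real.exp (-x) * Pk k x - c)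
    (f'' := fun x => -(Real.exp (-x) * x^(k-1) / (k-1).factorial))
    (fun x _ => (hf x).continuousAt.continuousWithinAt)
    (fun x _ => (hf x).hasDerivWithinAt)
    (fun x _ => (hf' x).hasDerivWithinAt)
  intro x hx
  rw [interior_Icc] at hx
  have hx0 : (0:ℝ) < x := hx.1
  have : 0 ≤ Real.exp (-x) * x^(k-1) / (k-1).factorial := by positivity
  linarith

lemma Qk_at_0 (k : ℕ) (hk : 1 ≤ k) : Qk k 0 = (k : ℝ) := by
  rw [Qk, Finset.sum_eq_single_of_mem 0 (Finset.mem_range.2 (by omega))]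
  · simp
  · intro n _ hn
    simp [zero_pow hn]

lemma Pk_lt_exp (k : ℕ) {x : ℝ} (hx : 0 < x) : Pk k x < Real.exp x := by
  have h := Real.sum_le_exp_of_nonneg hx.le (k+1)
  have h2 : Pk k x + x^k/k.factorial ≤ Real.exp x := by
    rw [Pk, ← Finset.sum_range_succ]; exact h
  have h3 : 0 < x^k/(k.factorial:ℝ) := by positivity
  linarith

lemma Qk_lt (k : ℕ) (hk : 1 ≤ k) {x : ℝ} (hx : 0 < x) :
    Real.exp (-x) * Qk k x < k := by
  have h1 : Qk k x ≤ (k:ℝ) * Pk k x := by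
    rw [Qk, Pk, Finset.mul_sum]
    refine Finset.sum_le_sum fun n _ => ?_
    have : (0:ℝ) ≤ x^n / n.factorial := by positivity
    have h2 : ((k:ℝ) - n) ≤ k := by
      have : (0:ℝ) ≤ n := Nat.cast_nonneg n
      linarith
    calc ((k:ℝ) - n) * x^n / n.factorial = ((k:ℝ) - n) * (x^n / n.factorial) := by ring
      _ ≤ (k:ℝ) * (x^n / n.factorial) := by
          exact mul_le_mul_of_nonneg_right h2 this
  have hkpos : (0:ℝ) < k := by exact_mod_cast hk
  have h2 : (k:ℝ) * Pk k x < k * Real.exp x :=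
    mul_lt_mul_of_pos_left (Pk_lt_exp k hx) hkpos
  have h3 : Real.exp (-x) * Qk k x ≤ Real.exp (-x) * ((k:ℝ) * Pk k x) :=
    mul_le_mul_of_nonneg_left h1 (Real.exp_nonneg _)
  have h4 : Real.exp (-x) * ((k:ℝ) * Real.exp x) = k := by
    rw [Real.exp_neg]
    field_simp [Real.exp_ne_zero]
  nlinarith [Real.exp_pos (-x), mul_lt_mul_of_pos_left h2 (Real.exp_pos (-x))]

lemma DK_pos (k : ℕ) (hk : 1 ≤ k) :
    0 < 1 - Real.exp (-(k:ℝ)) * (k:ℝ)^k / k.factorial := by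
  have hkpos : (0:ℝ) < k := by exact_mod_cast hk
  have h1 : (k:ℝ)^k / k.factorial < Real.exp (k:ℝ) := by
    have h := Real.sum_le_exp_of_nonneg hkpos.le (k+1)
    have h2 : ∑ n ∈ Finset.range (k+1), (k:ℝ)^n/n.factorial
        = Pk k (k:ℝ) + (k:ℝ)^k/k.factorial := by
      rw [Pk, Finset.sum_range_succ]
    have h3 : (1:ℝ) ≤ Pk k (k:ℝ) := by
      have := Finset.single_le_sum (f := fun n => (k:ℝ)^n/n.factorial)
        (fun n _ => by positivity) (Finset.mem_range.2 (by omega : 0 < k))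
      simpa [Pk] using this
    rw [h2] at h
    linarith
  have h4 : Real.exp (-(k:ℝ)) * ((k:ℝ)^k / k.factorial) < Real.exp (-(k:ℝ)) * Real.exp (k:ℝ) :=
    mul_lt_mul_of_pos_left h1 (Real.exp_pos _)
  rw [← Real.exp_add] at h4
  simp at h4
  rw [mul_div_assoc]
  linarith [h4]

lemma h_nonneg (k : ℕ) (hk : 1 ≤ k) {x : ℝ} (hx : x ∈ Set.Icc (0:ℝ) (k:ℝ)) :
    0 ≤ (k:ℝ) - gk k x - (1 - Real.exp (-(k:ℝ)) * (k:ℝ)^k / k.factorial) * x := by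
  set c := 1 - Real.exp (-(k:ℝ)) * (k:ℝ)^k / k.factorial with hc
  have hK : (0:ℝ) < k := by exact_mod_cast hk
  have hcon := h_concave k hk c
  have h0mem : (0:ℝ) ∈ Set.Icc (0:ℝ) (k:ℝ) := ⟨le_refl _, hK.le⟩
  have hKmem : (k:ℝ) ∈ Set.Icc (0:ℝ) (k:ℝ) := ⟨hK.le, le_refl _⟩
  have ha : 0 ≤ ((k:ℝ) - x)/k := by
    apply div_nonneg _ hK.le; linarith [hx.2]
  have hb : 0 ≤ x/(k:ℝ) := div_nonneg hx.1 hK.le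
  have hab : ((k:ℝ) - x)/k + x/(k:ℝ) = 1 := by field_simp; ring
  have key := hcon.2 h0mem hKmem ha hb hab
  have hpt : (((k:ℝ) - x)/k) • (0:ℝ) + (x/(k:ℝ)) • (k:ℝ) = x := by
    simp [smul_eq_mul]
    field_simp
  rw [hpt] at key
  have hf0 : (k:ℝ) - gk k 0 - c * 0 = 0 := by
    rw [gk, Qk_at_0 k hk]; simp
  have hfK : (k:ℝ) - gk k (k:ℝ) - c * (k:ℝ) = 0 := by
    rw [gk, Qk_at_k, hc]; ring
  simp only [smul_eq_mul] at key
  calc (0:ℝ) = (((k:ℝ) - x)/k) * ((k:ℝ) - gk k 0 - c * 0)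
        + (x/(k:ℝ)) * ((k:ℝ) - gk k (k:ℝ) - c * (k:ℝ)) := by rw [hf0, hfK]; ring
    _ ≤ (k:ℝ) - gk k x - c * x := key

/-- For Erlang(k, λ) inter-request times, the ratio of the static
baseline cost `min ((λ/k) R) 1` to the optimal offline cost
`1 - (exp (-λ R)/k) ∑_{m=1}^k ∑_{n=0}^{m-1} (λ R)^n / n!` is at most
`1/(1 - e^{-k} k^k / k!)`, attained at `λ = k/R`. -/
theorem static_baseline_ratio_erlang (k : ℕ) (hk : 1 ≤ k) (lam R : ℝ)
    (hlam : 0 < lam) (hR : 0 < R) :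
    min ((lam / k) * R) 1 /
        (1 - (Real.exp (-(lam * R)) / k) *
          ∑ m ∈ Finset.Icc 1 k, ∑ n ∈ Finset.range m, (lam * R) ^ n / n.factorial) ≤
      1 / (1 - Real.exp (-(k : ℝ)) * (k : ℝ) ^ k / k.factorial) ∧
    (lam = k / R →
      min ((lam / k) * R) 1 /
          (1 - (Real.exp (-(lam * R)) / k) *
            ∑ m ∈ Finset.Icc 1 k, ∑ n ∈ Finset.range m, (lam * R) ^ n / n.factorial) =
        1 / (1 - Real.exp (-(k : ℝ)) * (k : ℝ) ^ k / k.factorial)) := by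
  have hK : (0:ℝ) < k := by exact_mod_cast hk
  have hKne : (k:ℝ) ≠ 0 := hK.ne'
  set x := lam * R with hxdef
  have hx : 0 < x := mul_pos hlam hR
  rw [sum_Icc_eq k x]
  have hmin : lam / (k:ℝ) * R = x / (k:ℝ) := by rw [hxdef]; ring
  have hDK : 0 < 1 - Real.exp (-(k:ℝ)) * (k:ℝ)^k / k.factorial := DK_pos k hk
  have hQx : Real.exp (-x) * Qk k x < k := Qk_lt k hk hx
  have hDx : 0 < 1 - Real.exp (-x) / k * Qk k x := by
    have h1 : Real.exp (-x)/k * Qk k x < 1 := by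
      rw [div_mul_eq_mul_div, div_lt_one hK]; exact hQx
    linarith
  constructor
  · rcases le_total x (k:ℝ) with hxk | hxk
    · have hmin1 : min (lam / (k:ℝ) * R) 1 = x / k := by
        rw [hmin, min_eq_left ((div_le_one hK).2 hxk)]
      rw [hmin1, div_le_div_iff₀ hDx hDK]
      have hnn := h_nonneg k hk ⟨hx.le, hxk⟩
      rw [gk] at hnn
      have hexp : Real.exp (-x) / k * Qk k x = (Real.exp (-x) * Qk k x) / k := by ring
      rw [hexp]
      rw [div_mul_eq_mul_div, div_le_iff₀ hK]
      have : (1 - Real.exp (-x) * Qk k x / k) * (k:ℝ) = (k:ℝ) - Real.exp (-x) * Qk k x := by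
        field_simp
      rw [one_mul, this]
      nlinarith [hnn]
    · have hmin1 : min (lam / (k:ℝ) * R) 1 = 1 := by
        rw [hmin, min_eq_right ((one_le_div hK).2 hxk)]
      rw [hmin1]
      apply one_div_le_one_div_of_le hDK
      have hanti := gk_antitoneOn k hk (Set.mem_Ici.2 hK.le)
        (Set.mem_Ici.2 (le_trans hK.le hxk)) hxk
      rw [gk, gk, Qk_at_k] at hanti
      have h2 : Real.exp (-x) / k * Qk k x ≤ Real.exp (-(k:ℝ)) * (k:ℝ)^k / k.factorial := by
        rw [div_mul_eq_mul_div, div_le_iff₀ hK]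
        have hfact : (0:ℝ) < k.factorial := by positivity
        calc Real.exp (-x) * Qk k x ≤ Real.exp (-(k:ℝ)) * ((k:ℝ) * (k:ℝ)^k / k.factorial) :=
              hanti
          _ = Real.exp (-(k:ℝ)) * (k:ℝ)^k / k.factorial * (k:ℝ) := by ring
      linarith
  · intro hlamR
    have hxK : x = (k:ℝ) := by rw [hxdef, hlamR]; field_simp
    have hmin1 : min (lam / (k:ℝ) * R) 1 = 1 := by
      rw [hmin, hxK, div_self hKne, min_self]
    rw [hmin1, hxK, Qk_at_k]
    congr 1
    field_simp
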